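/- Let n ≥ 0 and let V be an (n+1)-dimensional vector space over ℚ with basis ε_0, …, ε_n. Let N : V → V be the linear map determined by N ε_0 = 0 and N ε_i = ε_{i−1} for 1 ≤ i ≤ n. Let Q be a nondegenerate bilinear form on V satisfying Q(N x, y) = −Q(x, N y) for all x, y ∈ V. Let T : V → V be a linear map preserving Q (i.e. Q(T x, T y) = Q(x, y) for all x, y), let δ ∈ V be such that the image of T − I is contained in the line ℚ·δ, and assume T ε_0 ≠ ε_0. Then δ does not lie in the span of ε_0, …, ε_{n−1}; equivalently, δ, Nδ, N²δ, …, N^n δ form a basis of V (δ generates V under N). -/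

import Mathlib

/-- Lemma 3.1 of the paper. Let `V` be an `(n+1)`-dimensional
ℚ-vector space with basis `ε 0, …, ε n`, `N` the lowering operator with
`N (ε 0) = 0` and `N (ε i) = ε (i-1)`, `Q` a nondegenerate bilinear form with
`Q(Nx,y) = −Q(x,Ny)`, `T` a `Q`-preserving map whose `T − I` has image in the
line spanned by `δ`, and `T (ε 0) ≠ ε 0`.  Then `δ` does not lie in the span of
`ε 0, …, ε (n-1)`; equivalently, `δ, Nδ, …, N^n δ` form a basis of `V`. -/
theorem stmt0 (n : ℕ) (V : Type*) [AddCommGroup V] [Module ℚ V]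
    (ε : Module.Basis (Fin (n + 1)) ℚ V)
    (N : V →ₗ[ℚ] V) (hN0 : N (ε 0) = 0)
    (hN : ∀ i : Fin n, N (ε i.succ) = ε i.castSucc)
    (Q : V →ₗ[ℚ] V →ₗ[ℚ] ℚ)
    (hQnd : ∀ x : V, (∀ y : V, Q x y = 0) → x = 0)
    (hQN : ∀ x y : V, Q (N x) y = - Q x (N y))
    (T : V →ₗ[ℚ] V) (hT : ∀ x y : V, Q (T x) (T y) = Q x y)
    (δ : V) (hδ : ∀ x : V, T x - x ∈ Submodule.span ℚ {δ})
    (hTe : T (ε 0) ≠ ε 0) :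
    δ ∉ Submodule.span ℚ (Set.range fun i : Fin n => ε i.castSucc) ∧
    LinearIndependent ℚ (fun k : Fin (n + 1) => (N ^ (k : ℕ)) δ) ∧
    Submodule.span ℚ (Set.range fun k : Fin (n + 1) => (N ^ (k : ℕ)) δ) = ⊤ := by
  -- the witness scalar for `ε 0`
  obtain ⟨a, ha⟩ := Submodule.mem_span_singleton.mp (hδ (ε 0))
  have haδ : a • δ ≠ 0 := by
    intro h
    apply hTe
    have := ha.symm.trans h
    rwa [sub_eq_zero] at this
  have hδne : δ ≠ 0 := by rintro rfl; simp at haδ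
  have hane : a ≠ 0 := by rintro rfl; simp at haδ
  -- Part 1: δ ∉ span(ε 0, …, ε (n-1))
  have part1 : δ ∉ Submodule.span ℚ (Set.range fun i : Fin n => ε i.castSucc) := by
    intro hmem
    -- δ is in the range of N
    have hrange : Submodule.span ℚ (Set.range fun i : Fin n => ε i.castSucc) ≤
        LinearMap.range N := by
      rw [Submodule.span_le]
      rintro _ ⟨i, rfl⟩
      exact ⟨ε i.succ, hN i⟩
    obtain ⟨β, hβ⟩ := hrange hmem
    have hQδe : Q δ (ε 0) = 0 := by rw [← hβ, hQN, hN0, map_zero, neg_zero]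
    have hQeδ : Q (ε 0) δ = 0 := by
      have h1 := hQN (ε 0) β
      rw [hN0, hβ] at h1
      simp only [map_zero, LinearMap.zero_apply] at h1
      linarith
    have hmain : ∀ y : V, ∀ b : ℚ, b • δ = T y - y →
        a * Q δ y + a * b * Q δ δ = 0 := by
      intro y b hb
      have h := hT (ε 0) y
      have hT0 : T (ε 0) = ε 0 + a • δ := by rw [ha]; abel
      have hTy : T y = y + b • δ := by rw [hb]; abel
      rw [hT0, hTy] at h
      simp only [map_add, map_smul, LinearMap.add_apply, LinearMap.smul_apply,
        smul_eq_mul, hQeδ] at h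
      linarith
    have hQδδ : Q δ δ = 0 := by
      have h := hmain (ε 0) a ha
      rw [hQδe] at h
      have : a * a * Q δ δ = 0 := by linarith
      rcases mul_eq_zero.mp this with h' | h'
      · exact absurd (mul_self_eq_zero.mp h') hane
      · exact h'
    have : δ = 0 := by
      apply hQnd
      intro y
      obtain ⟨b, hb⟩ := Submodule.mem_span_singleton.mp (hδ y)
      have h := hmain y b hb
      rw [hQδδ] at h
      have : a * Q δ y = 0 := by linarith
      rcases mul_eq_zero.mp this with h' | h'
      · exact absurd h' hane
      · exact h'
    exact hδne this
  -- the action of powers of N on the basis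
  have key1 : ∀ m : ℕ, ∀ i : Fin (n + 1), (i : ℕ) < m → (N ^ m) (ε i) = 0 := by
    intro m
    induction m with
    | zero => intro i hi; omega
    | succ m ih =>
      intro i hi
      rw [pow_succ, Module.End.mul_apply]
      rcases Nat.eq_zero_or_pos (i : ℕ) with h0 | h0
      · have : i = 0 := Fin.ext h0
        rw [this, hN0, map_zero]
      · obtain ⟨j, hj⟩ : ∃ j : ℕ, (i : ℕ) = j + 1 := ⟨(i : ℕ) - 1, by omega⟩
        have hjlt : j < n := by have := i.isLt; omega
        have his : i = (⟨j, hjlt⟩ : Fin n).succ := Fin.ext (by simp [hj])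
        rw [his, hN ⟨j, hjlt⟩]
        exact ih _ (by simp [Fin.castSucc, Fin.castAdd, Fin.castLE]; omega)
  have key2 : ∀ m : ℕ, (hm : m ≤ n) → (N ^ m) (ε (Fin.last n)) = ε ⟨n - m, by omega⟩ := by
    intro m
    induction m with
    | zero =>
      intro _
      have : (Fin.last n) = (⟨n - 0, by omega⟩ : Fin (n + 1)) := Fin.ext (by simp)
      rw [pow_zero, Module.End.one_apply, this]
    | succ m ih =>
      intro hm
      rw [pow_succ', Module.End.mul_apply, ih (by omega)]
      have h1 : (⟨n - m, by omega⟩ : Fin (n + 1)) = (⟨n - m - 1, by omega⟩ : Fin n).succ :=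
        Fin.ext (by simp; omega)
      have h2 : (⟨n - m - 1, by omega⟩ : Fin n).castSucc
          = (⟨n - (m + 1), by omega⟩ : Fin (n + 1)) := Fin.ext (by simp; omega)
      rw [h1, hN, h2]
  -- N^m = 0 for m > n
  have hNpow : ∀ m : ℕ, n + 1 ≤ m → (N ^ m : V →ₗ[ℚ] V) = 0 := by
    intro m hm
    apply ε.ext
    intro i
    rw [key1 m i (by have := i.isLt; omega)]
    simp
  -- N^n δ = c • ε 0 with c the top coordinate of δ
  set c : ℚ := ε.repr δ (Fin.last n) with hc
  have keyn : ∀ i : Fin (n + 1), (N ^ n) (ε i) = if i = Fin.last n then ε 0 else 0 := by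
    intro i
    by_cases h : i = Fin.last n
    · rw [if_pos h, h, key2 n le_rfl]
      congr 1
      exact Fin.ext (by simp)
    · rw [if_neg h]
      apply key1
      have h1 := i.isLt
      have h2 : (i : ℕ) ≠ n := fun hh => h (Fin.ext (by simp [Fin.last, hh]))
      omega
  have hNnδ : (N ^ n) δ = c • ε 0 := by
    conv_lhs => rw [← ε.sum_repr δ]
    rw [map_sum]
    simp only [map_smul, keyn, smul_ite, smul_zero, Finset.sum_ite_eq',
      Finset.mem_univ, if_true]
    rfl
  -- c ≠ 0, else δ ∈ span of the first n basis vectors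
  have hcne : c ≠ 0 := by
    intro h0
    apply part1
    have hsets : (Set.range fun i : Fin n => ε i.castSucc) =
        ε '' (Set.range Fin.castSucc) := by
      rw [← Set.range_comp]; rfl
    rw [hsets, Module.Basis.mem_span_image]
    intro i hi
    simp only [Finset.mem_coe, Finsupp.mem_support_iff] at hi
    have hine : i ≠ Fin.last n := by
      intro h; rw [h, ← hc, h0] at hi; exact hi rfl
    have : (i : ℕ) < n := by
      have := i.isLt
      have : (i : ℕ) ≠ n := fun h => hine (Fin.ext (by simp [Fin.last, h]))
      omega
    exact ⟨⟨(i : ℕ), this⟩, Fin.ext rfl⟩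
  have hNnδne : (N ^ n) δ ≠ 0 := by
    rw [hNnδ]
    simp [hcne, ε.ne_zero 0]
  -- Part 2: linear independence
  have part2 : LinearIndependent ℚ (fun k : Fin (n + 1) => (N ^ (k : ℕ)) δ) := by
    rw [Fintype.linearIndependent_iff]
    intro g hg
    have H : ∀ k : ℕ, ∀ j : Fin (n + 1), (j : ℕ) < k → g j = 0 := by
      intro k
      induction k with
      | zero => intro j hj; omega
      | succ k ih =>
        intro j hj
        by_cases hjk : (j : ℕ) < k
        · exact ih j hjk
        · have hjk' : (j : ℕ) = k := by omega
          have hkn : k ≤ n := by have := j.isLt; omega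
          -- apply N^(n-k) to the relation
          have h2 : ∑ i : Fin (n + 1), g i • (N ^ (n - k + (i : ℕ))) δ = 0 := by
            have := congrArg (fun x => (N ^ (n - k)) x) hg
            simp only [map_sum, map_smul, map_zero] at this
            convert this using 2 with i
            rw [← Module.End.mul_apply, ← pow_add]
          rw [Finset.sum_eq_single j] at h2
          · rw [hjk'] at h2
            have hnk : n - k + k = n := by omega
            rw [hnk, hNnδ, smul_smul] at h2
            have : g j * c = 0 := by
              by_contra hne
              exact (ε.ne_zero 0) (by
                have := smul_eq_zero.mp h2
                tauto)
            rcases mul_eq_zero.mp this with h' | h'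
            · exact h'
            · exact absurd h' hcne
          · intro i _ hi
            by_cases hik : (i : ℕ) < k
            · rw [ih i hik, zero_smul]
            · have : (i : ℕ) ≠ k := fun h => hi (Fin.ext (by rw [h, hjk']))
              have hbig : n + 1 ≤ n - k + (i : ℕ) := by omega
              rw [hNpow _ hbig]
              simp
          · intro h
            exact absurd (Finset.mem_univ _) h
    intro i
    exact H (n + 1) i i.isLt
  refine ⟨part1, part2, ?_⟩
  -- Part 3: spanning
  haveI : FiniteDimensional ℚ V := Module.Finite.of_basis ε
  apply part2.span_eq_top_of_card_eq_finrank
  rw [Fintype.card_fin, Module.finrank_eq_card_basis ε, Fintype.card_fin]
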